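/- Fix ε ∈ [0,1) and ν ∈ [0,1], let K be even, write f = ε(1+ν), g = ε(1−ν), e = (ε(1+ν) − ε²(1−ν))/(1 − ε + f/2), p = (1/(1−ε)) · e/(1−ε+e/2), and h = (g/(1−ε)²) · (1 − f/(2(1−ε+f/2))) · (1 − e/(2(1−ε+e/2))). Then 0 ≤ h ≤ p and p − h ≤ 2ε/(1−ε). -/

import Mathlib

/-- Bounds on the parameters of the inverse of the two-level randomized response transition
matrix: with `f = ε(1+ν)`, `g = ε(1−ν)`, `e = (ε(1+ν) − ε²(1−ν))/(1 − ε + f/2)`,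
`p = (1/(1−ε)) · e/(1−ε+e/2)` and
`h = (g/(1−ε)²)(1 − f/(2(1−ε+f/2)))(1 − e/(2(1−ε+e/2)))`, one has
`0 ≤ h ≤ p` and `p − h ≤ 2ε/(1−ε)`. -/
theorem two_level_rr_parameter_bounds
    (ε ν : ℝ) (hε : ε ∈ Set.Ico (0 : ℝ) 1) (hν : ν ∈ Set.Icc (0 : ℝ) 1)
    (f g e p h : ℝ)
    (hf : f = ε * (1 + ν))
    (hg : g = ε * (1 - ν))
    (he : e = (ε * (1 + ν) - ε ^ 2 * (1 - ν)) / (1 - ε + f / 2))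
    (hp : p = (1 / (1 - ε)) * (e / (1 - ε + e / 2)))
    (hh : h = (g / (1 - ε) ^ 2) * (1 - f / (2 * (1 - ε + f / 2)))
        * (1 - e / (2 * (1 - ε + e / 2)))) :
    0 ≤ h ∧ h ≤ p ∧ p - h ≤ 2 * ε / (1 - ε) := by
  obtain ⟨hε0, hε1⟩ := hε
  obtain ⟨hν0, hν1⟩ := hν
  have h1ε : (0:ℝ) < 1 - ε := by linarith
  have hd1 : 0 < 1 - ε + f / 2 := by
    rw [hf]; nlinarith [mul_nonneg hε0 hν0]
  have he0 : 0 ≤ e := by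
    rw [he]
    apply div_nonneg _ hd1.le
    nlinarith [mul_nonneg hε0 hν0, mul_nonneg (mul_nonneg hε0 hε0) hν0]
  have hd2 : 0 < 1 - ε + e / 2 := by linarith
  -- e * d1 = numerator
  have hed1 : e * (1 - ε + f / 2) = ε * (1 + ν) - ε ^ 2 * (1 - ν) := by
    rw [he, div_mul_cancel₀ _ hd1.ne']
  -- simplified factors
  have hfac1 : 1 - f / (2 * (1 - ε + f / 2)) = (1 - ε) / (1 - ε + f / 2) := by
    have hD : (0:ℝ) < (1 - ε) * 2 + f := by linarith
    field_simp [hD.ne']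
    rw [eq_div_iff (by linarith : (0:ℝ) < 2 * (1 - ε) + f).ne', sub_mul,
      div_mul_cancel₀ _ (by linarith : (0:ℝ) < 2 * (1 - ε) + f).ne']
    ring
  have hfac2 : 1 - e / (2 * (1 - ε + e / 2)) = (1 - ε) / (1 - ε + e / 2) := by
    have hD : (0:ℝ) < (1 - ε) * 2 + e := by linarith
    field_simp [hD.ne']
    ring
  have hH : h = g / ((1 - ε + f / 2) * (1 - ε + e / 2)) := by
    rw [hh, hfac1, hfac2, div_mul_div_comm, div_mul_div_comm,
      div_eq_div_iff (by positivity) (by positivity)]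
    ring
  have hP : p = e / ((1 - ε) * (1 - ε + e / 2)) := by
    rw [hp]; field_simp
  have hg0 : 0 ≤ g := by rw [hg]; nlinarith
  have hh0 : 0 ≤ h := by
    rw [hH]; exact div_nonneg hg0 (by positivity)
  have key : p - h = 2 * ε * ν / ((1 - ε) * ((1 - ε + f / 2) * (1 - ε + e / 2))) := by
    rw [hH, hP,
      div_sub_div _ _ (by positivity) (by positivity),
      div_eq_div_iff (by positivity) (by positivity), hg]
    linear_combination ((1 - ε) * (1 - ε + f / 2) * (1 - ε + e / 2) ^ 2) * hed1
  have hdd : (1 - ε + f / 2) * (1 - ε + e / 2) = ν + (1 - ε) * (1 - ν) := by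
    linear_combination (1 / 2) * hed1 + ((1 - ε) / 2) * hf
  refine ⟨hh0, ?_, ?_⟩
  · have hnn : 0 ≤ 2 * ε * ν / ((1 - ε) * ((1 - ε + f / 2) * (1 - ε + e / 2))) := by
      positivity
    linarith [key, hnn]
  · rw [key, div_le_div_iff₀ (by positivity) h1ε, hdd]
    clear he hh hp hH hP key hed1 hd1 hd2 he0 hfac1 hfac2 hdd hh0 hg0
    nlinarith [mul_nonneg (mul_nonneg hε0 h1ε.le)
      (mul_nonneg h1ε.le (by linarith : (0:ℝ) ≤ 1 - ν))]
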